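/- For v ∈ (0,1), the function g(v) = H([v², 2v(1-v), (1-v)²]) / (2v(1-v)), where H is the Shannon entropy in bits of the probability vector (v², 2v(1-v), (1-v)²), attains its unique minimum at v = 1/2, where g(1/2) = 3. -/

import Mathlib

open Real

/-- Shannon entropy in bits of the probability vector `(v², 2v(1-v), (1-v)²)`. -/
noncomputable def splitEntropy (v : ℝ) : ℝ :=
  -(v ^ 2 * Real.logb 2 (v ^ 2) + 2 * v * (1 - v) * Real.logb 2 (2 * v * (1 - v)) +
    (1 - v) ^ 2 * Real.logb 2 ((1 - v) ^ 2))

lemma my_logA {u : ℝ} (hu : 0 ≤ u) (hu1 : u ≤ 1) :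
    Real.log (1 + u) ≤ u - u ^ 2 / 2 + u ^ 3 / 3 := by
  set f : ℝ → ℝ := fun x => x - x ^ 2 / 2 + x ^ 3 / 3 - Real.log (1 + x) with hf
  have hmono : MonotoneOn f (Set.Icc 0 1) := by
    apply monotoneOn_of_deriv_nonneg (convex_Icc 0 1)
    · apply ContinuousOn.sub
      · fun_prop
      · apply ContinuousOn.log (by fun_prop)
        intro x hx
        simp only [Set.mem_Icc] at hx
        nlinarith [hx.1]
    · intro x hx
      rw [interior_Icc] at hx
      have hne : (1 : ℝ) + x ≠ 0 := by nlinarith [hx.1]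
      have h1 : HasDerivAt (fun y : ℝ => Real.log (1 + y)) (1 / (1 + x)) x := by
        have := (Real.hasDerivAt_log hne).comp x ((hasDerivAt_id x).const_add 1)
        rw [one_div]; exact this.congr_deriv (mul_one _)
      have h2 : HasDerivAt f (1 - x + x ^ 2 - 1 / (1 + x)) x := by
        have hp : HasDerivAt (fun y : ℝ => y - y ^ 2 / 2 + y ^ 3 / 3) (1 - x + x ^ 2) x := by
          have := ((hasDerivAt_id x).sub ((hasDerivAt_pow 2 x).div_const 2)).add
            ((hasDerivAt_pow 3 x).div_const 3)
          refine this.congr_deriv ?_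
          ring
        exact hp.sub h1
      exact (h2.differentiableAt).differentiableWithinAt
    · intro x hx
      rw [interior_Icc] at hx
      have hx0 := hx.1
      have hne : (1 : ℝ) + x ≠ 0 := by nlinarith
      have h1 : HasDerivAt (fun y : ℝ => Real.log (1 + y)) (1 / (1 + x)) x := by
        have := (Real.hasDerivAt_log hne).comp x ((hasDerivAt_id x).const_add 1)
        rw [one_div]; exact this.congr_deriv (mul_one _)
      have h2 : HasDerivAt f (1 - x + x ^ 2 - 1 / (1 + x)) x := by
        have hp : HasDerivAt (fun y : ℝ => y - y ^ 2 / 2 + y ^ 3 / 3) (1 - x + x ^ 2) x := by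
          have := ((hasDerivAt_id x).sub ((hasDerivAt_pow 2 x).div_const 2)).add
            ((hasDerivAt_pow 3 x).div_const 3)
          refine this.congr_deriv ?_
          ring
        exact hp.sub h1
      rw [h2.deriv]
      have h1x : (0:ℝ) < 1 + x := by linarith
      rw [sub_nonneg, div_le_iff₀ h1x]
      nlinarith
  have := hmono (Set.mem_Icc.2 ⟨le_refl 0, zero_le_one⟩) (Set.mem_Icc.2 ⟨hu, hu1⟩) hu
  norm_num [hf] at this
  linarith

lemma my_logB {u : ℝ} (hu : 0 ≤ u) (hu1 : u ≤ 3/4) :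
    Real.log (1 - u) ≤ -(u + u ^ 2 / 2 + u ^ 3 / 3) := by
  set f : ℝ → ℝ := fun x => -(x + x ^ 2 / 2 + x ^ 3 / 3) - Real.log (1 - x) with hf
  have hmono : MonotoneOn f (Set.Icc 0 (3/4)) := by
    apply monotoneOn_of_deriv_nonneg (convex_Icc 0 (3/4))
    · apply ContinuousOn.sub
      · fun_prop
      · apply ContinuousOn.log (by fun_prop)
        intro x hx
        simp only [Set.mem_Icc] at hx
        nlinarith [hx.2]
    · intro x hx
      rw [interior_Icc] at hx
      have hne : (1 : ℝ) - x ≠ 0 := by nlinarith [hx.2]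
      have h1 : HasDerivAt (fun y : ℝ => Real.log (1 - y)) (-(1 / (1 - x))) x := by
        have hi : HasDerivAt (fun y : ℝ => 1 - y) (-1 : ℝ) x := by
          simpa using (hasDerivAt_id x).const_sub 1
        have := (Real.hasDerivAt_log hne).comp x hi
        refine this.congr_deriv ?_
        field_simp
      have h2 : HasDerivAt f (-(1 + x + x ^ 2) + 1 / (1 - x)) x := by
        have hp : HasDerivAt (fun y : ℝ => -(y + y ^ 2 / 2 + y ^ 3 / 3)) (-(1 + x + x ^ 2)) x := by
          have := (((hasDerivAt_id x).add ((hasDerivAt_pow 2 x).div_const 2)).add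
            ((hasDerivAt_pow 3 x).div_const 3)).neg
          refine this.congr_deriv ?_
          ring
        have := hp.sub h1
        refine this.congr_deriv ?_
        ring
      exact (h2.differentiableAt).differentiableWithinAt
    · intro x hx
      rw [interior_Icc] at hx
      have hx0 := hx.1
      have hx1 : x < 3/4 := hx.2
      have h1x : (0:ℝ) < 1 - x := by linarith
      have hne : (1 : ℝ) - x ≠ 0 := ne_of_gt h1x
      have h1 : HasDerivAt (fun y : ℝ => Real.log (1 - y)) (-(1 / (1 - x))) x := by
        have hi : HasDerivAt (fun y : ℝ => 1 - y) (-1 : ℝ) x := by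
          simpa using (hasDerivAt_id x).const_sub 1
        have := (Real.hasDerivAt_log hne).comp x hi
        refine this.congr_deriv ?_
        field_simp
      have h2 : HasDerivAt f (-(1 + x + x ^ 2) + 1 / (1 - x)) x := by
        have hp : HasDerivAt (fun y : ℝ => -(y + y ^ 2 / 2 + y ^ 3 / 3)) (-(1 + x + x ^ 2)) x := by
          have := (((hasDerivAt_id x).add ((hasDerivAt_pow 2 x).div_const 2)).add
            ((hasDerivAt_pow 3 x).div_const 3)).neg
          refine this.congr_deriv ?_
          ring
        have := hp.sub h1
        refine this.congr_deriv ?_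
        ring
      rw [h2.deriv]
      have : -(1 + x + x ^ 2) + 1 / (1 - x) = x ^ 3 / (1 - x) := by
        field_simp
        ring
      rw [this]
      positivity
  have := hmono (Set.mem_Icc.2 ⟨le_refl 0, by norm_num⟩) (Set.mem_Icc.2 ⟨hu, hu1⟩) hu
  norm_num [hf] at this
  linarith

lemma my_keyG : StrictAntiOn
    (fun x : ℝ => 2 * Real.log 2 * x ^ 2 + 2 * Real.log 2 * (1 - x) - (1 + x) * Real.log (1 + x))
    (Set.Icc (3/4 : ℝ) 1) := by
  apply strictAntiOn_of_deriv_neg (convex_Icc _ _)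
  · apply ContinuousOn.sub
    · fun_prop
    · apply ContinuousOn.mul (by fun_prop)
      apply ContinuousOn.log (by fun_prop)
      intro x hx
      simp only [Set.mem_Icc] at hx
      nlinarith [hx.1]
  · intro x hx
    rw [interior_Icc] at hx
    have hx0 : (3/4 : ℝ) < x := hx.1
    have hx1 : x < 1 := hx.2
    have hne : (1 : ℝ) + x ≠ 0 := by nlinarith
    have h1x : (0:ℝ) < 1 + x := by linarith
    have hlog : HasDerivAt (fun y : ℝ => Real.log (1 + y)) (1 / (1 + x)) x := by
      have := (Real.hasDerivAt_log hne).comp x ((hasDerivAt_id x).const_add 1)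
      rw [one_div]; exact this.congr_deriv (mul_one _)
    have hmul : HasDerivAt (fun y : ℝ => (1 + y) * Real.log (1 + y))
        (Real.log (1 + x) + 1) x := by
      have := (((hasDerivAt_id x).const_add 1).mul hlog)
      refine this.congr_deriv ?_
      simp only [id]; field_simp
    have h2 : HasDerivAt
        (fun y : ℝ => 2 * Real.log 2 * y ^ 2 + 2 * Real.log 2 * (1 - y) - (1 + y) * Real.log (1 + y))
        (2 * Real.log 2 * (2 * x) + (-(2 * Real.log 2)) - (Real.log (1 + x) + 1)) x := by
      have hp1 : HasDerivAt (fun y : ℝ => 2 * Real.log 2 * y ^ 2) (2 * Real.log 2 * (2 * x)) x := by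
        have := (hasDerivAt_pow 2 x).const_mul (2 * Real.log 2)
        refine this.congr_deriv ?_
        ring
      have hp2 : HasDerivAt (fun y : ℝ => 2 * Real.log 2 * (1 - y)) (-(2 * Real.log 2)) x := by
        have hi : HasDerivAt (fun y : ℝ => 1 - y) (-1 : ℝ) x := by
          simpa using (hasDerivAt_id x).const_sub 1
        have := hi.const_mul (2 * Real.log 2)
        refine this.congr_deriv ?_
        ring
      exact (hp1.add hp2).sub hmul
    rw [h2.deriv]
    -- need: 4 log2 x - 2 log2 - log(1+x) - 1 < 0
    have hl2 : Real.log 2 < 0.6931471808 := by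
      have := Real.log_two_lt_d9
      linarith
    have hl2' : (0.6931471803 : ℝ) < Real.log 2 := Real.log_two_gt_d9
    have hlog74 : Real.log (7/4 : ℝ) ≤ Real.log (1 + x) :=
      Real.log_le_log (by norm_num) (by linarith)
    have h167 : Real.log (16/7 : ℝ) < 1 := by
      rw [← Real.exp_lt_exp, Real.exp_log (by norm_num)]
      have := Real.exp_one_gt_d9
      norm_num at this ⊢
      linarith
    have hsplit : Real.log (16/7 : ℝ) = 2 * Real.log 2 - Real.log (7/4 : ℝ) := by
      rw [show (16/7 : ℝ) = 2 ^ 2 / (7/4) by norm_num,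
        Real.log_div (by norm_num) (by norm_num), Real.log_pow]
      push_cast
      ring
    nlinarith [hx1, hl2']

lemma my_key {u : ℝ} (h0 : 0 < u) (h1 : u < 1) :
    (1 + u) * Real.log (1 + u) + (1 - u) * Real.log (1 - u) < 2 * Real.log 2 * u ^ 2 := by
  rcases le_or_gt u (3/4) with hc | hc
  · have hA := my_logA h0.le (by linarith)
    have hB := my_logB h0.le hc
    have h1u : (0:ℝ) ≤ 1 + u := by linarith
    have h2u : (0:ℝ) ≤ 1 - u := by linarith
    have hA' : (1 + u) * Real.log (1 + u) ≤ (1 + u) * (u - u ^ 2 / 2 + u ^ 3 / 3) :=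
      mul_le_mul_of_nonneg_left hA h1u
    have hB' : (1 - u) * Real.log (1 - u) ≤ (1 - u) * (-(u + u ^ 2 / 2 + u ^ 3 / 3)) :=
      mul_le_mul_of_nonneg_left hB h2u
    have hl2 : (0.6931471803 : ℝ) < Real.log 2 := Real.log_two_gt_d9
    have hu2 : (0:ℝ) < u ^ 2 := pow_pos h0 2
    have hq : u ^ 2 ≤ 9/16 := by nlinarith
    have h4 : u ^ 4 ≤ 9/16 * u ^ 2 := by nlinarith [mul_le_mul_of_nonneg_left hq hu2.le]
    have hsum : (1 + u) * (u - u ^ 2 / 2 + u ^ 3 / 3) + (1 - u) * (-(u + u ^ 2 / 2 + u ^ 3 / 3))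
        = u ^ 2 + 2/3 * u ^ 4 := by ring
    have hlast : 11/8 * u ^ 2 < 2 * Real.log 2 * u ^ 2 := by nlinarith
    linarith
  · have hG := my_keyG (Set.mem_Icc.2 ⟨hc.le, h1.le⟩) (Set.mem_Icc.2 ⟨by norm_num, le_refl 1⟩) h1
    simp only at hG
    have hG1 : 2 * Real.log 2 * (1:ℝ) ^ 2 + 2 * Real.log 2 * (1 - 1) - (1 + 1) * Real.log (1 + 1) = 0 := by
      norm_num
    rw [show ((1:ℝ) + 1) = 2 by norm_num] at hG
    have hGpos : 0 < 2 * Real.log 2 * u ^ 2 + 2 * Real.log 2 * (1 - u) - (1 + u) * Real.log (1 + u) := by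
      have : 2 * Real.log 2 * (1:ℝ) ^ 2 + 2 * Real.log 2 * (1 - 1) - 2 * Real.log 2 = 0 := by ring
      linarith [hG, this]
    -- (1-u) log(1-u) ≤ -2 log2 (1-u)
    have hlogsmall : Real.log (1 - u) ≤ -(2 * Real.log 2) := by
      have : Real.log (1 - u) ≤ Real.log (1/4 : ℝ) :=
        Real.log_le_log (by linarith) (by linarith)
      have h14 : Real.log (1/4 : ℝ) = -(2 * Real.log 2) := by
        rw [show (1/4 : ℝ) = (2 ^ 2)⁻¹ by norm_num, Real.log_inv, Real.log_pow]
        push_cast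
        ring
      linarith [h14 ▸ this]
    have h2u : (0:ℝ) ≤ 1 - u := by linarith
    have hB' : (1 - u) * Real.log (1 - u) ≤ (1 - u) * (-(2 * Real.log 2)) :=
      mul_le_mul_of_nonneg_left hlogsmall h2u
    nlinarith [hGpos, hB']

lemma my_F {v : ℝ} (h0 : 0 < v) (h1 : v < 1) (hne : v ≠ 1/2) :
    v * Real.log v + (1 - v) * Real.log (1 - v) + 4 * Real.log 2 * (v * (1 - v)) < 0 := by
  have hv' : (0:ℝ) < 1 - v := by linarith
  have e1 : Real.log (2 * v) = Real.log 2 + Real.log v :=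
    Real.log_mul two_ne_zero (ne_of_gt h0)
  have e2 : Real.log (2 * (1 - v)) = Real.log 2 + Real.log (1 - v) :=
    Real.log_mul two_ne_zero (ne_of_gt hv')
  rcases lt_or_gt_of_ne hne with hlt | hgt
  · have hk := my_key (u := 1 - 2*v) (by linarith) (by linarith)
    rw [show (1 : ℝ) + (1 - 2*v) = 2 * (1 - v) by ring,
        show (1 : ℝ) - (1 - 2*v) = 2 * v by ring] at hk
    rw [e1, e2] at hk
    nlinarith [hk]
  · have hk := my_key (u := 2*v - 1) (by linarith) (by linarith)
    rw [show (1 : ℝ) + (2*v - 1) = 2 * v by ring,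
        show (1 : ℝ) - (2*v - 1) = 2 * (1 - v) by ring] at hk
    rw [e1, e2] at hk
    nlinarith [hk]

lemma my_entropy_eq {v : ℝ} (h0 : 0 < v) (h1 : v < 1) :
    splitEntropy v * Real.log 2 =
      -(2 * v * (1 - v)) * Real.log 2 - 2 * (v * Real.log v + (1 - v) * Real.log (1 - v)) := by
  have hv' : (0:ℝ) < 1 - v := by linarith
  unfold splitEntropy
  rw [Real.logb, Real.logb, Real.logb]
  rw [Real.log_pow, Real.log_pow,
      Real.log_mul (by positivity) (ne_of_gt hv'),
      Real.log_mul two_ne_zero (ne_of_gt h0)]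
  have hl2 : Real.log 2 ≠ 0 := by
    have := Real.log_two_gt_d9; positivity
  field_simp
  ring

/-- For `v ∈ (0,1)`, `g v = H([v², 2v(1-v), (1-v)²]) / (2v(1-v))`
attains its unique minimum at `v = 1/2`, where `g (1/2) = 3`. -/
theorem stmt3 :
    splitEntropy (1 / 2) / (2 * (1 / 2 : ℝ) * (1 - 1 / 2)) = 3 ∧
    ∀ v ∈ Set.Ioo (0 : ℝ) 1,
      3 ≤ splitEntropy v / (2 * v * (1 - v)) ∧
      (splitEntropy v / (2 * v * (1 - v)) = 3 ↔ v = 1 / 2) := by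
  have hl2 : (0.6931471803 : ℝ) < Real.log 2 := Real.log_two_gt_d9
  have hl2pos : (0:ℝ) < Real.log 2 := by linarith
  have half : splitEntropy (1/2 : ℝ) = 3/2 := by
    have h := my_entropy_eq (v := 1/2) (by norm_num) (by norm_num)
    have hlhalf : Real.log ((1:ℝ) - 1/2) = -Real.log 2 := by
      rw [show (1:ℝ) - 1/2 = (2:ℝ)⁻¹ by norm_num, Real.log_inv]
    have hlhalf2 : Real.log ((1:ℝ)/2) = -Real.log 2 := by
      rw [show (1:ℝ)/2 = (2:ℝ)⁻¹ by norm_num, Real.log_inv]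
    rw [hlhalf, hlhalf2] at h
    have : splitEntropy (1/2 : ℝ) * Real.log 2 = (3/2) * Real.log 2 := by
      rw [h]; ring
    exact mul_right_cancel₀ (ne_of_gt hl2pos) this
  constructor
  · rw [half]; norm_num
  · intro v hv
    obtain ⟨h0, h1⟩ := hv
    have hd : (0:ℝ) < 2 * v * (1 - v) := by nlinarith
    by_cases hne : v = 1/2
    · subst hne
      norm_num [half]
    · have hF := my_F h0 h1 hne
      have hE := my_entropy_eq h0 h1
      have hstrict : 3 < splitEntropy v / (2 * v * (1 - v)) := by
        rw [lt_div_iff₀ hd]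
        have : 3 * (2 * v * (1 - v)) * Real.log 2 < splitEntropy v * Real.log 2 := by
          rw [hE]
          nlinarith [hF]
        exact lt_of_mul_lt_mul_right (by linarith) hl2pos.le
      refine ⟨hstrict.le, ?_, fun h => absurd h hne⟩
      intro heq
      rw [heq] at hstrict
      exact absurd rfl (ne_of_gt hstrict)
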